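/- For the Tribonacci sequence and any k ≥ 1: 16·∑_{j=0}^{k} T(4j)² = 15·T(4k)² + 4·T(4k−1)² − 2·T(4k−3)² − T(4k−4)² + 2. -/

import Mathlib

open Finset

theorem stmt16 (T : ℕ → ℤ) (h0 : T 0 = 0) (h1 : T 1 = 1) (h2 : T 2 = 1) (hT : ∀ n, 3 ≤ n → T n = T (n-1) + T (n-2) + T (n-3)) :
    ∀ k, 1 ≤ k → 16*∑ j ∈ range (k+1), (T (4*j))^2 = 15*(T (4*k))^2 + 4*(T (4*k-1))^2 - 2*(T (4*k-3))^2 - (T (4*k-4))^2 + 2 := by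
  intro k hk
  induction k, hk using Nat.le_induction with
  | base =>
    have h3 : T 3 = 2 := by have := hT 3 (by norm_num); simp at this; omega
    have h4 : T 4 = 4 := by have := hT 4 (by norm_num); norm_num at this; omega
    norm_num [Finset.sum_range_succ, h0, h1, h3, h4]
  | succ k hk ih =>
    have hm : T (4*k-4) = T (4*k-1) - T (4*k-2) - T (4*k-3) := by
      have := hT (4*k-1) (by omega)
      rw [show 4*k-1-1 = 4*k-2 from by omega, show 4*k-1-2 = 4*k-3 from by omega,
        show 4*k-1-3 = 4*k-4 from by omega] at this
      linarith
    have hA : T (4*k) = T (4*k-1) + T (4*k-2) + T (4*k-3) := hT (4*k) (by omega)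
    have hB : T (4*k+1) = T (4*k) + T (4*k-1) + T (4*k-2) := by
      have := hT (4*k+1) (by omega)
      rwa [show 4*k+1-1 = 4*k from by omega, show 4*k+1-2 = 4*k-1 from by omega,
        show 4*k+1-3 = 4*k-2 from by omega] at this
    have hC : T (4*k+2) = T (4*k+1) + T (4*k) + T (4*k-1) := by
      have := hT (4*k+2) (by omega)
      rwa [show 4*k+2-1 = 4*k+1 from by omega, show 4*k+2-2 = 4*k from by omega,
        show 4*k+2-3 = 4*k-1 from by omega] at this
    have hD : T (4*k+3) = T (4*k+2) + T (4*k+1) + T (4*k) := by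
      have := hT (4*k+3) (by omega)
      rwa [show 4*k+3-1 = 4*k+2 from by omega, show 4*k+3-2 = 4*k+1 from by omega,
        show 4*k+3-3 = 4*k from by omega] at this
    have hE : T (4*k+4) = T (4*k+3) + T (4*k+2) + T (4*k+1) := by
      have := hT (4*k+4) (by omega)
      rwa [show 4*k+4-1 = 4*k+3 from by omega, show 4*k+4-2 = 4*k+2 from by omega,
        show 4*k+4-3 = 4*k+1 from by omega] at this
    rw [Finset.sum_range_succ, show 4*(k+1) = 4*k+4 from by ring,
      show 4*k+4-1 = 4*k+3 from by omega, show 4*k+4-3 = 4*k+1 from by omega,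
      show 4*k+4-4 = 4*k from by omega, hE, hD, hC, hB, hA]
    rw [hA, hm] at ih
    linear_combination ih
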